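/- arXiv:1611.08038 — 4 statements merged into one kernel-verified Lean document; each statement's English description precedes it below -/
import Mathlib

section
/- Let Q be an m×n real matrix with a k-dimensional nullspace. Let R be an n×k matrix whose projection onto the nullspace of Q is full rank, i.e., if N is an n×k matrix whose columns form a basis for Nul(Q), then Rᵀ N is invertible. Let V be an arbitrary m×k matrix. Then the range of Q + V Rᵀ contains both the range of Q and the range of V. -/
open Matrix

/-- **Range-enlargement lemma.**
Let `Q` be an `m×n` real matrix with a `k`-dimensional nullspace, whose nullspace
has basis given by the columns of the `n×k` matrix `N` (linear independence plus
the characterization that `Q x = 0` iff `x` is a linear combination of columns of `N`).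
Let `R` be an `n×k` matrix with full-rank projection onto `Nul Q`, i.e. `Rᵀ N` is
invertible. Let `V` be an arbitrary `m×k` matrix. Then the range of `Q + V Rᵀ`
contains both the range of `Q` and the range of `V`: every vector of the form
`Q x₀ + V α₀` is attained. -/
theorem stmt0 (m n k : ℕ)
    (Q : Matrix (Fin m) (Fin n) ℝ) (N : Matrix (Fin n) (Fin k) ℝ)
    (R : Matrix (Fin n) (Fin k) ℝ) (V : Matrix (Fin m) (Fin k) ℝ)
    (hNindep : LinearIndependent ℝ (fun j : Fin k => fun i : Fin n => N i j))
    (hNspan : ∀ x : Fin n → ℝ, Q.mulVec x = 0 ↔ ∃ α : Fin k → ℝ, x = N.mulVec α)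
    (hR : IsUnit (Rᵀ * N)) :
    ∀ (x₀ : Fin n → ℝ) (α₀ : Fin k → ℝ),
      ∃ x : Fin n → ℝ, (Q + V * Rᵀ).mulVec x = Q.mulVec x₀ + V.mulVec α₀ := by
  intro x₀ α₀
  set B := Rᵀ * N with hB
  have hdet : IsUnit B.det := (Matrix.isUnit_iff_isUnit_det B).mp hR
  have hBinv : B * B⁻¹ = 1 := Matrix.mul_nonsing_inv B hdet
  set w : Fin k → ℝ := B⁻¹.mulVec (α₀ - Rᵀ.mulVec x₀) with hw
  refine ⟨x₀ + N.mulVec w, ?_⟩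
  have hQN : Q.mulVec (N.mulVec w) = 0 := (hNspan _).mpr ⟨w, rfl⟩
  have hRN : Rᵀ.mulVec (N.mulVec w) = α₀ - Rᵀ.mulVec x₀ := by
    rw [Matrix.mulVec_mulVec, ← hB, hw, Matrix.mulVec_mulVec, hBinv, Matrix.one_mulVec]
  rw [Matrix.add_mulVec, Matrix.mulVec_add, hQN, add_zero, ← Matrix.mulVec_mulVec,
    Matrix.mulVec_add, hRN, Matrix.mulVec_add, Matrix.mulVec_sub]
  abel
end

section
/- Under the hypotheses of the range-enlargement lemma, an explicit solution exists: for any x₀ ∈ ℝⁿ and α₀ ∈ ℝᵏ, the vector x = x₀ + N (Rᵀ N)⁻¹ (α₀ − Rᵀ x₀) satisfies (Q + V Rᵀ) x = Q x₀ + V α₀. -/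
open Matrix

/-- **Explicit solution in the range-enlargement lemma.**
Under the hypotheses of the range-enlargement lemma (`Q` an `m×n` real matrix whose
nullspace is `k`-dimensional with basis the columns of `N`, `R` an `n×k` matrix with
`Rᵀ N` invertible, `V` an arbitrary `m×k` matrix), for any `x₀ ∈ ℝⁿ` and `α₀ ∈ ℝᵏ`
the explicit vector `x = x₀ + N (Rᵀ N)⁻¹ (α₀ − Rᵀ x₀)` satisfies
`(Q + V Rᵀ) x = Q x₀ + V α₀`. -/
theorem stmt1 (m n k : ℕ)
    (Q : Matrix (Fin m) (Fin n) ℝ) (N : Matrix (Fin n) (Fin k) ℝ)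
    (R : Matrix (Fin n) (Fin k) ℝ) (V : Matrix (Fin m) (Fin k) ℝ)
    (hNindep : LinearIndependent ℝ (fun j : Fin k => fun i : Fin n => N i j))
    (hNspan : ∀ x : Fin n → ℝ, Q.mulVec x = 0 ↔ ∃ α : Fin k → ℝ, x = N.mulVec α)
    (hR : IsUnit (Rᵀ * N))
    (x₀ : Fin n → ℝ) (α₀ : Fin k → ℝ) :
    (Q + V * Rᵀ).mulVec
        (x₀ + N.mulVec ((Rᵀ * N)⁻¹.mulVec (α₀ - Rᵀ.mulVec x₀)))
      = Q.mulVec x₀ + V.mulVec α₀ := by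
  have hQN : ∀ α : Fin k → ℝ, Q.mulVec (N.mulVec α) = 0 := fun α =>
    (hNspan _).2 ⟨α, rfl⟩
  have hinv : (Rᵀ * N) * (Rᵀ * N)⁻¹ = 1 :=
    Matrix.mul_nonsing_inv _ ((Matrix.isUnit_iff_isUnit_det _).mp hR)
  have key : Rᵀ.mulVec (N.mulVec ((Rᵀ * N)⁻¹.mulVec (α₀ - Rᵀ.mulVec x₀)))
      = α₀ - Rᵀ.mulVec x₀ := by
    rw [mulVec_mulVec, mulVec_mulVec, hinv, one_mulVec]
  rw [add_mulVec, mulVec_add, mulVec_add, hQN]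
  simp only [← mulVec_mulVec]
  rw [key]
  simp [mulVec_sub]
end

section
/- Let Q be an m×n real matrix with m ≥ n whose nullspace is k-dimensional with basis the columns of N (n×k), let R be n×k with Rᵀ N invertible, let W be an m×k matrix whose columns form a basis of a k-dimensional subspace of Nul(Qᵀ), and let V be an m×k matrix with Wᵀ V invertible. Then the matrix Q + V Rᵀ has trivial nullspace. -/
open Matrix

/-- **Trivial nullspace after rank-k perturbation.**
Let `Q` be an `m×n` real matrix with `m ≥ n`, whose nullspace is `k`-dimensional
with basis the columns of the `n×k` matrix `N`. Let `R` be `n×k` with `Rᵀ N`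
invertible. Let `W` be an `m×k` matrix whose columns are linearly independent and
lie in `Nul Qᵀ` (i.e. span a `k`-dimensional subspace of `Nul Qᵀ`), and let `V` be
an `m×k` matrix with `Wᵀ V` invertible. Then `Q + V Rᵀ` has trivial nullspace. -/
theorem stmt2 (m n k : ℕ) (hmn : n ≤ m)
    (Q : Matrix (Fin m) (Fin n) ℝ) (N : Matrix (Fin n) (Fin k) ℝ)
    (R : Matrix (Fin n) (Fin k) ℝ) (W V : Matrix (Fin m) (Fin k) ℝ)
    (hNindep : LinearIndependent ℝ (fun j : Fin k => fun i : Fin n => N i j))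
    (hNspan : ∀ x : Fin n → ℝ, Q.mulVec x = 0 ↔ ∃ α : Fin k → ℝ, x = N.mulVec α)
    (hR : IsUnit (Rᵀ * N))
    (hWindep : LinearIndependent ℝ (fun j : Fin k => fun i : Fin m => W i j))
    (hWker : Qᵀ * W = 0)
    (hWV : IsUnit (Wᵀ * V)) :
    ∀ x : Fin n → ℝ, (Q + V * Rᵀ).mulVec x = 0 → x = 0 := by
  intro x hx
  have hWQ : Wᵀ * Q = 0 := by
    have := congrArg transpose hWker
    simpa [transpose_mul] using this
  have h1 : (Wᵀ * V).mulVec (Rᵀ.mulVec x) = 0 := by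
    have h := congrArg (Wᵀ.mulVec) hx
    rw [mulVec_mulVec, Matrix.mul_add, hWQ, zero_add] at h
    rw [mulVec_mulVec]
    rw [← Matrix.mul_assoc] at h
    simpa using h
  have hinj := mulVec_injective_iff_isUnit.2 hWV
  have h2 : Rᵀ.mulVec x = 0 := by
    apply hinj
    simpa using h1
  have hQx : Q.mulVec x = 0 := by
    have := hx
    rw [add_mulVec, ← mulVec_mulVec, h2, mulVec_zero, add_zero] at this
    exact this
  obtain ⟨α, hα⟩ := (hNspan x).1 hQx
  have h3 : (Rᵀ * N).mulVec α = 0 := by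
    rw [← mulVec_mulVec, ← hα, h2]
  have hα0 : α = 0 := mulVec_injective_iff_isUnit.2 hR (by simpa using h3)
  rw [hα, hα0, mulVec_zero]
end

section
/- Let v be harmonic in the closed unit square B with zero discrepancy: v_R − v_L = 0, v_{nR} − v_{nL} = 0, v_U − v_D = 0, v_{nU} − v_{nD} = 0. Then v is constant on B. -/
open Set

/-- directional partial derivative of a scalar field on the plane `ℂ ≅ ℝ²`;
`pd 1 f = ∂₁ f` and `pd Complex.I f = ∂₂ f`. -/
noncomputable def pd (w : ℂ) (f : ℂ → ℝ) (x : ℂ) : ℝ := fderiv ℝ f x w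

/-- Laplacian in the plane. -/
noncomputable def lap (f : ℂ → ℝ) (x : ℂ) : ℝ :=
  pd 1 (pd 1 f) x + pd Complex.I (pd Complex.I f) x

/-- the open unit square `B = (−1/2,1/2)²`. -/
def usq : Set ℂ :=
  {z | z.re ∈ Ioo (-(1/2) : ℝ) (1/2) ∧ z.im ∈ Ioo (-(1/2) : ℝ) (1/2)}

/-- its closure, the closed unit square `B̄`. -/
def csq : Set ℂ :=
  {z | z.re ∈ Icc (-(1/2) : ℝ) (1/2) ∧ z.im ∈ Icc (-(1/2) : ℝ) (1/2)}

open MeasureTheory Complex Filter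

lemma usq_eq : usq = Ioo (-(1/2) : ℝ) (1/2) ×ℂ Ioo (-(1/2) : ℝ) (1/2) := by
  ext z; exact Iff.rfl

lemma isOpen_usq : IsOpen usq := by
  rw [usq_eq]; exact isOpen_Ioo.reProdIm isOpen_Ioo

lemma usq_sub_csq : usq ⊆ csq := fun z hz =>
  ⟨⟨hz.1.1.le, hz.1.2.le⟩, ⟨hz.2.1.le, hz.2.2.le⟩⟩

lemma csq_sub_closure : csq ⊆ closure usq := by
  rw [usq_eq, closure_reProdIm, closure_Ioo (by norm_num : (-(1/2) : ℝ) ≠ 1/2)]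
  intro z hz
  exact ⟨hz.1, hz.2⟩

lemma convex_usq : Convex ℝ usq := by
  have : usq = Complex.equivRealProdLm ⁻¹'
      (Ioo (-(1/2) : ℝ) (1/2) ×ˢ Ioo (-(1/2) : ℝ) (1/2)) := by
    ext z; simp [usq, Complex.equivRealProdLm]
  rw [this]
  exact ((convex_Ioo _ _).prod (convex_Ioo _ _)).linear_preimage _

/-- A function continuous on a neighborhood of `csq` which is constant on `usq`
is constant on `csq`. -/
lemma eqOn_csq_of_eqOn_usq {h : ℂ → ℝ} {U : Set ℂ} {c : ℝ} (hU : IsOpen U)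
    (hsub : csq ⊆ U) (hc : ContinuousOn h U) (h0 : ∀ z ∈ usq, h z = c) :
    ∀ z ∈ csq, h z = c := by
  intro z hz
  have hcl : z ∈ closure usq := csq_sub_closure hz
  have hca : ContinuousAt h z := hc.continuousAt (hU.mem_nhds (hsub hz))
  have hne : (nhdsWithin z usq).NeBot := mem_closure_iff_nhdsWithin_neBot.1 hcl
  have h1 : Tendsto h (nhdsWithin z usq) (nhds (h z)) :=
    hca.tendsto.mono_left nhdsWithin_le_nhds
  have h2 : Tendsto h (nhdsWithin z usq) (nhds c) := by
    refine Tendsto.congr' ?_ tendsto_const_nhds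
    filter_upwards [self_mem_nhdsWithin] with w hw using (h0 w hw).symm
  exact tendsto_nhds_unique h1 h2

set_option maxHeartbeats 1000000 in
/-- **Uniqueness (up to constants) for the empty-cell Laplace discrepancy BVP.**
Let `v` be harmonic in the unit square `B = (−1/2,1/2)²`, `C²` up to its closure
(formalized as `C²` on an open neighborhood of `B̄`), with zero discrepancy:
`v_R − v_L = 0`, `v_{nR} − v_{nL} = 0`, `v_U − v_D = 0`, `v_{nU} − v_{nD} = 0`.
Then `v` is constant on `B̄`. -/
theorem stmt6 (v : ℂ → ℝ) (U : Set ℂ) (hU : IsOpen U) (hsub : csq ⊆ U)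
    (hv : ContDiffOn ℝ 2 v U)
    (hharm : ∀ z ∈ usq, lap v z = 0)
    (hg1 : ∀ y ∈ Icc (-(1/2) : ℝ) (1/2),
      v ((1/2 : ℂ) + (y : ℂ) * Complex.I) = v ((-(1/2) : ℂ) + (y : ℂ) * Complex.I))
    (hg2 : ∀ y ∈ Icc (-(1/2) : ℝ) (1/2),
      pd 1 v ((1/2 : ℂ) + (y : ℂ) * Complex.I)
        = pd 1 v ((-(1/2) : ℂ) + (y : ℂ) * Complex.I))
    (hg3 : ∀ x ∈ Icc (-(1/2) : ℝ) (1/2),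
      v ((x : ℂ) + (1/2 : ℂ) * Complex.I) = v ((x : ℂ) + (-(1/2) : ℂ) * Complex.I))
    (hg4 : ∀ x ∈ Icc (-(1/2) : ℝ) (1/2),
      pd Complex.I v ((x : ℂ) + (1/2 : ℂ) * Complex.I)
        = pd Complex.I v ((x : ℂ) + (-(1/2) : ℂ) * Complex.I)) :
    ∃ c : ℝ, ∀ z ∈ csq, v z = c := by
  classical
  set E : (ℝ × ℝ) ≃L[ℝ] ℂ := Complex.equivRealProdCLM.symm with hEdef
  have hE : ∀ p : ℝ × ℝ, E p = (p.1 : ℂ) + (p.2 : ℂ) * Complex.I := fun p =>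
    Complex.equivRealProdCLM_symm_apply p
  have hEre : ∀ p : ℝ × ℝ, (E p).re = p.1 := by intro p; rw [hE]; simp
  have hEim : ∀ p : ℝ × ℝ, (E p).im = p.2 := by intro p; rw [hE]; simp
  -- abbreviations
  set a : ℝ × ℝ := (-(1/2 : ℝ), -(1/2 : ℝ)) with ha
  set b : ℝ × ℝ := ((1/2 : ℝ), (1/2 : ℝ)) with hb
  have hab : a ≤ b := ⟨by norm_num, by norm_num⟩
  have hmemIcc : ∀ p ∈ Icc a b, E p ∈ csq := by
    intro p hp
    refine ⟨?_, ?_⟩ <;> [rw [hEre]; rw [hEim]]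
    · exact ⟨hp.1.1, hp.2.1⟩
    · exact ⟨hp.1.2, hp.2.2⟩
  have hmemIoo : ∀ p ∈ Ioo a.1 b.1 ×ˢ Ioo a.2 b.2, E p ∈ usq := by
    intro p hp
    refine ⟨?_, ?_⟩ <;> [rw [hEre]; rw [hEim]]
    · exact hp.1
    · exact hp.2
  -- differentiability facts
  have h2 : (1 : WithTop ℕ∞) + 1 ≤ 2 := by norm_num
  have hvd : ∀ z ∈ U, DifferentiableAt ℝ v z := fun z hz =>
    ((hv.differentiableOn (by norm_num)).differentiableAt (hU.mem_nhds hz))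
  have hfderivC : ContDiffOn ℝ 1 (fderiv ℝ v) U := hv.fderiv_of_isOpen hU h2
  have hg1C : ContDiffOn ℝ 1 (pd 1 v) U := hfderivC.clm_apply contDiffOn_const
  have hg2C : ContDiffOn ℝ 1 (pd Complex.I v) U := hfderivC.clm_apply contDiffOn_const
  have hg1d : ∀ z ∈ U, DifferentiableAt ℝ (pd 1 v) z := fun z hz =>
    ((hg1C.differentiableOn one_ne_zero).differentiableAt (hU.mem_nhds hz))
  have hg2d : ∀ z ∈ U, DifferentiableAt ℝ (pd Complex.I v) z := fun z hz =>
    ((hg2C.differentiableOn one_ne_zero).differentiableAt (hU.mem_nhds hz))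
  have h01 : (0 : WithTop ℕ∞) + 1 ≤ 1 := by norm_num
  have hpd11C : ContinuousOn (pd 1 (pd 1 v)) U := by
    have := (hg1C.fderiv_of_isOpen hU h01).clm_apply
      (contDiffOn_const (c := (1 : ℂ)))
    exact this.continuousOn
  have hpd22C : ContinuousOn (pd Complex.I (pd Complex.I v)) U := by
    have := (hg2C.fderiv_of_isOpen hU h01).clm_apply
      (contDiffOn_const (c := Complex.I))
    exact this.continuousOn
  have hlapC : ContinuousOn (lap v) U := hpd11C.add hpd22C
  have hlap0 : ∀ z ∈ csq, lap v z = 0 :=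
    eqOn_csq_of_eqOn_usq hU hsub hlapC hharm
  -- set up the divergence theorem
  set Df : ℂ → (ℂ →L[ℝ] ℝ) := fun z =>
    v z • fderiv ℝ (pd 1 v) z + (pd 1 v z) • fderiv ℝ v z with hDf
  set Dg : ℂ → (ℂ →L[ℝ] ℝ) := fun z =>
    v z • fderiv ℝ (pd Complex.I v) z + (pd Complex.I v z) • fderiv ℝ v z with hDg
  set f : ℝ × ℝ → ℝ := fun p => v (E p) * pd 1 v (E p) with hf
  set g : ℝ × ℝ → ℝ := fun p => v (E p) * pd Complex.I v (E p) with hg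
  set f' : ℝ × ℝ → (ℝ × ℝ →L[ℝ] ℝ) := fun p =>
    (Df (E p)).comp (E : ℝ × ℝ →L[ℝ] ℂ) with hf'
  set g' : ℝ × ℝ → (ℝ × ℝ →L[ℝ] ℝ) := fun p =>
    (Dg (E p)).comp (E : ℝ × ℝ →L[ℝ] ℂ) with hg'
  have hE10 : E ((1 : ℝ), (0 : ℝ)) = 1 := by rw [hE]; simp
  have hE01 : E ((0 : ℝ), (1 : ℝ)) = Complex.I := by rw [hE]; simp
  -- value of the divergence
  have hdivval : ∀ p : ℝ × ℝ, f' p (1, 0) + g' p (0, 1)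
      = v (E p) * lap v (E p)
        + ((pd 1 v (E p)) ^ 2 + (pd Complex.I v (E p)) ^ 2) := by
    intro p
    have h1 : f' p (1, 0) = Df (E p) 1 := by
      show Df (E p) (E ((1:ℝ), (0:ℝ))) = Df (E p) 1
      rw [hE10]
    have h2 : g' p (0, 1) = Dg (E p) Complex.I := by
      show Dg (E p) (E ((0:ℝ), (1:ℝ))) = Dg (E p) Complex.I
      rw [hE01]
    rw [h1, h2, hDf, hDg]
    simp only [ContinuousLinearMap.add_apply, ContinuousLinearMap.coe_smul',
      Pi.smul_apply, smul_eq_mul, lap, pd]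
    ring
  -- derivatives
  have hEd : ∀ p : ℝ × ℝ, HasFDerivAt (fun q : ℝ × ℝ => E q)
      (E : ℝ × ℝ →L[ℝ] ℂ) p := fun p => E.hasFDerivAt
  have Hdf : ∀ p : ℝ × ℝ, E p ∈ U → HasFDerivAt f (f' p) p := by
    intro p hp
    have hm : HasFDerivAt (fun z => v z * pd 1 v z) (Df (E p)) (E p) :=
      ((hvd _ hp).hasFDerivAt.mul (hg1d _ hp).hasFDerivAt)
    exact hm.comp p (hEd p)
  have Hdg : ∀ p : ℝ × ℝ, E p ∈ U → HasFDerivAt g (g' p) p := by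
    intro p hp
    have hm : HasFDerivAt (fun z => v z * pd Complex.I v z) (Dg (E p)) (E p) :=
      ((hvd _ hp).hasFDerivAt.mul (hg2d _ hp).hasFDerivAt)
    exact hm.comp p (hEd p)
  -- continuity of f, g on Icc a b
  have hmapsU : MapsTo (fun p : ℝ × ℝ => E p) (Icc a b) U := fun p hp =>
    hsub (hmemIcc p hp)
  have HcE : ContinuousOn (fun p : ℝ × ℝ => E p) (Icc a b) :=
    E.continuous.continuousOn
  have Hcf : ContinuousOn f (Icc a b) :=
    (hv.continuousOn.mul hg1C.continuousOn).comp HcE hmapsU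
  have Hcg : ContinuousOn g (Icc a b) :=
    (hv.continuousOn.mul hg2C.continuousOn).comp HcE hmapsU
  -- integrability of the divergence
  have hDivCont : ContinuousOn (fun p : ℝ × ℝ => f' p (1, 0) + g' p (0, 1))
      (Icc a b) := by
    have hΦ : ContinuousOn (fun z : ℂ =>
        v z * lap v z + ((pd 1 v z) ^ 2 + (pd Complex.I v z) ^ 2)) U :=
      (hv.continuousOn.mul hlapC).add
        ((hg1C.continuousOn.pow 2).add (hg2C.continuousOn.pow 2))
    have := hΦ.comp HcE hmapsU
    refine this.congr fun p hp => ?_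
    exact hdivval p
  have hcompact : IsCompact (Icc a b) := isCompact_Icc
  have Hi : IntegrableOn (fun p : ℝ × ℝ => f' p (1, 0) + g' p (0, 1)) (Icc a b) :=
    hDivCont.integrableOn_compact hcompact
  -- apply the divergence theorem
  have hdiv := integral_divergence_prod_Icc_of_hasFDerivAt_off_countable_of_le
    f g f' g' a b hab ∅ countable_empty Hcf Hcg
    (fun p hp => Hdf p (hsub (usq_sub_csq (hmemIoo p hp.1))))
    (fun p hp => Hdg p (hsub (usq_sub_csq (hmemIoo p hp.1))))
    Hi
  -- the boundary terms vanish
  have hIccIcc : uIcc (a.1) (b.1) = Icc (-(1/2) : ℝ) (1/2) := by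
    rw [uIcc_of_le hab.1]
  have hbd1 : (∫ x in a.1..b.1, g (x, b.2)) = ∫ x in a.1..b.1, g (x, a.2) := by
    refine intervalIntegral.integral_congr ?_
    intro x hx
    rw [hIccIcc] at hx
    have e1 : E (x, b.2) = (x : ℂ) + (1/2 : ℂ) * Complex.I := by
      rw [hE]; norm_num
    have e2 : E (x, a.2) = (x : ℂ) + (-(1/2) : ℂ) * Complex.I := by
      rw [hE]; norm_num
    show v (E (x, b.2)) * pd Complex.I v (E (x, b.2))
        = v (E (x, a.2)) * pd Complex.I v (E (x, a.2))
    rw [e1, e2, hg3 x hx, hg4 x hx]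
  have hbd2 : (∫ y in a.2..b.2, f (b.1, y)) = ∫ y in a.2..b.2, f (a.1, y) := by
    refine intervalIntegral.integral_congr ?_
    intro y hy
    have hy' : y ∈ Icc (-(1/2) : ℝ) (1/2) := by
      rwa [uIcc_of_le hab.2] at hy
    have e1 : E (b.1, y) = (1/2 : ℂ) + (y : ℂ) * Complex.I := by
      rw [hE]; norm_num
    have e2 : E (a.1, y) = (-(1/2) : ℂ) + (y : ℂ) * Complex.I := by
      rw [hE]; norm_num
    show v (E (b.1, y)) * pd 1 v (E (b.1, y))
        = v (E (a.1, y)) * pd 1 v (E (a.1, y))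
    rw [e1, e2, hg1 y hy', hg2 y hy']
  have hzero : (∫ p in Icc a b, (f' p (1, 0) + g' p (0, 1))) = 0 := by
    rw [hdiv, hbd1, hbd2]; ring
  -- the integrand equals |∇v|² on the square
  set F : ℝ × ℝ → ℝ := fun p =>
    (pd 1 v (E p)) ^ 2 + (pd Complex.I v (E p)) ^ 2 with hFdef
  have hFeq : ∀ p ∈ Icc a b, f' p (1, 0) + g' p (0, 1) = F p := by
    intro p hp
    rw [hdivval p, hlap0 _ (hmemIcc p hp)]
    ring
  have hFzero : (∫ p in Icc a b, F p) = 0 := by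
    rw [← hzero]
    exact (setIntegral_congr_fun measurableSet_Icc hFeq).symm
  have hFnonneg : ∀ p : ℝ × ℝ, 0 ≤ F p := fun p => by positivity
  have hFi : IntegrableOn F (Icc a b) :=
    Hi.congr_fun hFeq measurableSet_Icc
  -- positivity argument: F vanishes on the open square
  have hF0 : ∀ z ∈ usq, (pd 1 v z) ^ 2 + (pd Complex.I v z) ^ 2 = 0 := by
    intro z hz
    by_contra hne
    set p₀ : ℝ × ℝ := (z.re, z.im) with hp₀
    have hEp₀ : E p₀ = z := by rw [hE]; exact Complex.re_add_im z
    have hp₀mem : p₀ ∈ Ioo a.1 b.1 ×ˢ Ioo a.2 b.2 := ⟨hz.1, hz.2⟩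
    have hFp₀ : 0 < F p₀ := by
      rcases lt_or_eq_of_le (by positivity :
          (0:ℝ) ≤ (pd 1 v z) ^ 2 + (pd Complex.I v z) ^ 2) with h | h
      · simpa [hFdef, hEp₀] using h
      · exact absurd h.symm hne
    -- continuity of F at p₀
    have hzU : z ∈ U := hsub (usq_sub_csq hz)
    have hΨ : ContinuousOn (fun w : ℂ =>
        (pd 1 v w) ^ 2 + (pd Complex.I v w) ^ 2) U :=
      (hg1C.continuousOn.pow 2).add (hg2C.continuousOn.pow 2)
    have hΨat : ContinuousAt (fun w : ℂ =>
        (pd 1 v w) ^ 2 + (pd Complex.I v w) ^ 2) z :=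
      hΨ.continuousAt (hU.mem_nhds hzU)
    have hFat : ContinuousAt F p₀ := by
      have hEc : ContinuousAt (fun p : ℝ × ℝ => E p) p₀ := E.continuous.continuousAt
      have hΨat' : ContinuousAt (fun w : ℂ =>
          (pd 1 v w) ^ 2 + (pd Complex.I v w) ^ 2) (E p₀) := by
        rw [hEp₀]; exact hΨat
      exact hΨat'.comp hEc
    have hev : ∀ᶠ p in nhds p₀, F p₀ / 2 < F p :=
      hFat.eventually (eventually_gt_nhds (half_lt_self hFp₀))
    obtain ⟨t, htsub, htopen, htmem⟩ := eventually_nhds_iff.mp hev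
    set s' : Set (ℝ × ℝ) := t ∩ (Ioo a.1 b.1 ×ˢ Ioo a.2 b.2) with hs'
    have hs'open : IsOpen s' := htopen.inter (isOpen_Ioo.prod isOpen_Ioo)
    have hs'ne : s'.Nonempty := ⟨p₀, htmem, hp₀mem⟩
    have hs'pos : 0 < volume s' := hs'open.measure_pos volume hs'ne
    have hs'sub : s' ⊆ Icc a b := by
      intro p hp
      have := hp.2
      exact ⟨⟨this.1.1.le, this.2.1.le⟩, ⟨this.1.2.le, this.2.2.le⟩⟩
    have hs'fin : volume s' < ⊤ :=
      lt_of_le_of_lt (measure_mono hs'sub)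
        (hcompact.measure_lt_top)
    have hle1 : (∫ p in s', F p) ≤ ∫ p in Icc a b, F p := by
      refine setIntegral_mono_set hFi ?_ ?_
      · exact Filter.Eventually.of_forall hFnonneg
      · exact HasSubset.Subset.eventuallyLE hs'sub
    have hle2 : F p₀ / 2 * (volume s').toReal ≤ ∫ p in s', F p := by
      have := setIntegral_ge_of_const_le hs'open.measurableSet hs'fin.ne
        (fun p hp => (htsub p hp.1).le) (hFi.mono_set hs'sub)
      rwa [smul_eq_mul, mul_comm, measureReal_def] at this
    have hpos : 0 < F p₀ / 2 * (volume s').toReal := by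
      have := ENNReal.toReal_pos hs'pos.ne' hs'fin.ne
      positivity
    have : (0:ℝ) < ∫ p in Icc a b, F p := lt_of_lt_of_le hpos (hle2.trans hle1)
    rw [hFzero] at this
    exact lt_irrefl 0 this
  -- the gradient vanishes on the open square
  have hgrad : ∀ z ∈ usq, fderiv ℝ v z = 0 := by
    intro z hz
    have h1 := (add_eq_zero_iff_of_nonneg (sq_nonneg _) (sq_nonneg _)).mp (hF0 z hz)
    have h1' : pd 1 v z = 0 ∧ pd Complex.I v z = 0 :=
      ⟨pow_eq_zero_iff two_ne_zero |>.mp h1.1, pow_eq_zero_iff two_ne_zero |>.mp h1.2⟩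
    ext w
    have hw : w = w.re • (1 : ℂ) + w.im • Complex.I := by
      simp [Complex.real_smul, Complex.re_add_im]
    rw [hw]
    rw [(fderiv ℝ v z).map_add, (fderiv ℝ v z).map_smul, (fderiv ℝ v z).map_smul]
    have e1 : fderiv ℝ v z 1 = 0 := h1'.1
    have e2 : fderiv ℝ v z Complex.I = 0 := h1'.2
    rw [e1, e2]
    simp
  -- v is constant on the open square
  have h0mem : (0 : ℂ) ∈ usq := by
    constructor <;> constructor <;> norm_num
  have hconst : ∀ z ∈ usq, v z = v 0 := by
    intro z hz
    have hdiff : DifferentiableOn ℝ v usq :=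
      (hv.differentiableOn (by norm_num)).mono
        (fun w hw => hsub (usq_sub_csq hw))
    have hbound : ∀ w ∈ usq, ‖fderivWithin ℝ v usq w‖ ≤ 0 := by
      intro w hw
      rw [fderivWithin_of_isOpen isOpen_usq hw, hgrad w hw]
      simp
    have := convex_usq.norm_image_sub_le_of_norm_fderivWithin_le
      hdiff hbound h0mem hz
    have h' : |v z - v 0| ≤ 0 := by
      simpa [Real.norm_eq_abs] using this
    have h'' : v z - v 0 = 0 := abs_eq_zero.mp (le_antisymm h' (abs_nonneg _))
    linarith
  exact ⟨v 0, eqOn_csq_of_eqOn_usq hU hsub hv.continuousOn hconst⟩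
end
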